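/- There exists n_0 (one may take n_0 = ⌈e²⌉) such that for all n ≥ n_0 and every flip distribution D on {0,1,…,n}, the function h is monotonically increasing on {0,1,…,n}, i.e., h(d) ≤ h(d+1) for all 0 ≤ d ≤ n−1. -/

import Mathlib

open scoped BigOperators ENNReal Classical

/-- The search space `{0,1}^n`. -/
abbrev Point (n : ℕ) := Fin n → Bool

/-- `OM x` is the number of one-bits of `x`. -/
def OM {n : ℕ} (x : Point n) : ℕ := (Finset.univ.filter fun i => x i = true).card

/-- Hamming distance between two points. -/
def hamming {n : ℕ} (x y : Point n) : ℕ := (Finset.univ.filter fun i => x i ≠ y i).card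

/-- A flip distribution `D = (p_0, …, p_n)` on `{0,…,n}`. -/
structure FlipDist (n : ℕ) where
  p : ℕ → ℝ
  nonneg : ∀ k, 0 ≤ p k
  sum_eq : ∑ k ∈ Finset.range (n+1), p k = 1
  zero_of_gt : ∀ k, n < k → p k = 0

/-- The mean `χ = Σ k·p_k` of a flip distribution. -/
noncomputable def FlipDist.mean {n : ℕ} (D : FlipDist n) : ℝ :=
  ∑ k ∈ Finset.range (n+1), (k : ℝ) * D.p k

/-- `mutP D x y` is the probability that `mut_D(x) = y`: sample `k ∼ D`, then flip a
uniformly random set of exactly `k` positions.  Exactly one `k`-set maps `x` to `y`,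
namely when `k` is the Hamming distance. -/
noncomputable def mutP {n : ℕ} (D : FlipDist n) (x y : Point n) : ℝ :=
  D.p (hamming x y) / (Nat.choose n (hamming x y) : ℝ)

/-- `x` is a global maximum of `f`. -/
def isOpt {n : ℕ} (f : Point n → ℝ) (x : Point n) : Prop := ∀ y, f y ≤ f x

/-- One-step transition probability of the elitist (1+1)-EA_D maximizing `f`. -/
noncomputable def eaStep {n : ℕ} (D : FlipDist n) (f : Point n → ℝ) (x y : Point n) : ℝ :=
  (if f x ≤ f y then mutP D x y else 0) +
  (if y = x then ∑ z ∈ Finset.univ.filter (fun z => f z < f x), mutP D x z else 0)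

/-- Distribution of the current search point `x^(t)` of the (1+1)-EA_D maximizing `f`,
with initial distribution `init`. -/
noncomputable def eaDist {n : ℕ} (D : FlipDist n) (f : Point n → ℝ)
    (init : Point n → ℝ) : ℕ → Point n → ℝ
  | 0 => init
  | t+1 => fun y => ∑ x : Point n, eaDist D f init t x * eaStep D f x y

/-- `survival D f init t = Pr[T > t]`: since the set of global maxima is absorbing for the
elitist chain, this is the probability that `x^(t)` is not a global maximum of `f`. -/
noncomputable def survival {n : ℕ} (D : FlipDist n) (f : Point n → ℝ)
    (init : Point n → ℝ) (t : ℕ) : ℝ :=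
  ∑ x ∈ Finset.univ.filter (fun x => ¬ isOpt f x), eaDist D f init t x

/-- Expected runtime `E[T] = Σ_{t≥0} Pr[T > t]` of the (1+1)-EA_D on `f`. -/
noncomputable def expRuntime {n : ℕ} (D : FlipDist n) (f : Point n → ℝ)
    (init : Point n → ℝ) : ℝ≥0∞ :=
  ∑' t : ℕ, ENNReal.ofReal (survival D f init t)

/-- The uniform initial distribution on `{0,1}^n`. -/
noncomputable def uniformInit (n : ℕ) : Point n → ℝ := fun _ => ((2:ℝ)^n)⁻¹

/-- The linear function `f(x) = Σ w_i x_i`. -/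
noncomputable def linF {n : ℕ} (w : Fin n → ℝ) : Point n → ℝ :=
  fun x => ∑ i : Fin n, w i * (if x i then 1 else 0)

/-- `dOf x = min(OM(x), n − OM(x))`. -/
def dOf {n : ℕ} (x : Point n) : ℕ := min (OM x) (n - OM x)

/-- `B(n,d,r) = Σ_{i=max(⌈r/2⌉, r+d−n)}^{min(d,r)} (2i−r)·C(d,i)·C(n−d,r−i)/C(n,r)`. -/
noncomputable def B (n d r : ℕ) : ℝ :=
  ∑ i ∈ Finset.Icc (max ((r+1)/2) (r + d - n)) (min d r),
    ((2*i - r : ℕ) : ℝ) * (Nat.choose d i : ℝ) * (Nat.choose (n-d) (r-i) : ℝ) /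
      (Nat.choose n r : ℝ)

/-- `h̃(d) = Σ_{r=1}^{n−1} (p_r + p_{n−r})·B(n,d,r)`. -/
noncomputable def htilde {n : ℕ} (D : FlipDist n) (d : ℕ) : ℝ :=
  ∑ r ∈ Finset.Icc 1 (n-1), (D.p r + D.p (n-r)) * B n d r

/-- `d_0 = ⌊(p_1 + p_{n−1})·n/(ln n)²⌋`. -/
noncomputable def d0 {n : ℕ} (D : FlipDist n) : ℕ :=
  ⌊(D.p 1 + D.p (n-1)) * n / (Real.log n)^2⌋₊

/-- `h(d) = h̃(d)` for `d ≤ d_0`, and `h(d) = n` for `d > d_0`. -/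
noncomputable def hfun {n : ℕ} (D : FlipDist n) (d : ℕ) : ℝ :=
  if d ≤ d0 D then htilde D d else n


lemma aux_vandermonde (n d r : ℕ) (hd : d ≤ n) :
    ∑ i ∈ Finset.range (r+1), (d.choose i) * ((n-d).choose (r-i)) = n.choose r := by
  have h := Nat.add_choose_eq d (n-d) r
  rw [Nat.add_sub_cancel' hd] at h
  rw [h, Finset.Nat.sum_antidiagonal_eq_sum_range_succ_mk]

lemma aux_B_eq (n d r : ℕ) (hd : d ≤ n) :
    B n d r = (∑ i ∈ Finset.range (r+1),
      ((2*i - r : ℕ) : ℝ) * (d.choose i : ℝ) * ((n-d).choose (r-i) : ℝ)) / (n.choose r : ℝ) := by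
  unfold B
  rw [← Finset.sum_div]
  congr 1
  refine Finset.sum_subset ?_ ?_
  · intro i hi
    simp only [Finset.mem_Icc, Finset.mem_range] at *
    omega
  · intro i hi hni
    simp only [Finset.mem_range] at hi
    simp only [Finset.mem_Icc, not_and_or, not_le] at hni
    rcases hni with h | h
    · rcases lt_max_iff.mp h with h | h
      · have : 2*i - r = 0 := by omega
        simp [this]
      · have : (n-d).choose (r-i) = 0 := Nat.choose_eq_zero_of_lt (by omega)
        simp [this]
    · have : d.choose i = 0 := Nat.choose_eq_zero_of_lt (by omega)
      simp [this]

lemma aux_L1 (d m r : ℕ) :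
    ∑ i ∈ Finset.range (r+1), ((2*i - r : ℕ) : ℝ) * (d.choose i : ℝ) * ((m+1).choose (r-i) : ℝ)
      = (∑ i ∈ Finset.range (r+1), ((2*i - r : ℕ) : ℝ) * (d.choose i : ℝ) * (m.choose (r-i) : ℝ))
        + ∑ j ∈ Finset.range r, ((2*j - r : ℕ) : ℝ) * (d.choose j : ℝ) * (m.choose (r-1-j) : ℝ) := by
  rw [Finset.sum_range_succ, Finset.sum_range_succ (f := fun i => ((2*i - r : ℕ) : ℝ) * (d.choose i : ℝ) * (m.choose (r-i) : ℝ))]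
  have key : ∑ i ∈ Finset.range r, ((2*i - r : ℕ) : ℝ) * (d.choose i : ℝ) * ((m+1).choose (r-i) : ℝ)
      = ∑ i ∈ Finset.range r, (((2*i - r : ℕ) : ℝ) * (d.choose i : ℝ) * (m.choose (r-i) : ℝ)
          + ((2*i - r : ℕ) : ℝ) * (d.choose i : ℝ) * (m.choose (r-1-i) : ℝ)) := by
    refine Finset.sum_congr rfl fun i hi => ?_
    simp only [Finset.mem_range] at hi
    have h1 : r - i = (r-1-i) + 1 := by omega
    have hc : (m+1).choose (r-i) = m.choose (r-1-i) + m.choose (r-i) := by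
      rw [h1, Nat.choose_succ_succ']
    rw [hc]
    push_cast
    ring
  rw [key, Finset.sum_add_distrib]
  simp [Nat.sub_self]
  ring

lemma aux_L2 (d m r : ℕ) :
    ∑ i ∈ Finset.range (r+1), ((2*i - r : ℕ) : ℝ) * ((d+1).choose i : ℝ) * (m.choose (r-i) : ℝ)
      = (∑ i ∈ Finset.range (r+1), ((2*i - r : ℕ) : ℝ) * (d.choose i : ℝ) * (m.choose (r-i) : ℝ))
        + ∑ j ∈ Finset.range r, ((2*(j+1) - r : ℕ) : ℝ) * (d.choose j : ℝ) * (m.choose (r-1-j) : ℝ) := by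
  rw [Finset.sum_range_succ', Finset.sum_range_succ' (f := fun i => ((2*i - r : ℕ) : ℝ) * (d.choose i : ℝ) * (m.choose (r-i) : ℝ))]
  have hg0 : ((2*0 - r : ℕ) : ℝ) = 0 := by norm_num
  have key : ∑ j ∈ Finset.range r, ((2*(j+1) - r : ℕ) : ℝ) * ((d+1).choose (j+1) : ℝ) * (m.choose (r-(j+1)) : ℝ)
      = ∑ j ∈ Finset.range r, (((2*(j+1) - r : ℕ) : ℝ) * (d.choose (j+1) : ℝ) * (m.choose (r-(j+1)) : ℝ)
          + ((2*(j+1) - r : ℕ) : ℝ) * (d.choose j : ℝ) * (m.choose (r-1-j) : ℝ)) := by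
    refine Finset.sum_congr rfl fun j hj => ?_
    have hc : (d+1).choose (j+1) = d.choose j + d.choose (j+1) := Nat.choose_succ_succ d j
    have h2 : r - (j+1) = r - 1 - j := by omega
    rw [hc, h2]
    push_cast
    ring
  rw [key, Finset.sum_add_distrib]
  simp [hg0]

lemma aux_numer_mono (n d r : ℕ) (hdn : d + 1 ≤ n) :
    ∑ i ∈ Finset.range (r+1), ((2*i - r : ℕ) : ℝ) * (d.choose i : ℝ) * ((n-d).choose (r-i) : ℝ)
      ≤ ∑ i ∈ Finset.range (r+1), ((2*i - r : ℕ) : ℝ) * ((d+1).choose i : ℝ) * ((n-(d+1)).choose (r-i) : ℝ) := by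
  set m := n - (d+1) with hm
  have hnd : n - d = m + 1 := by omega
  rw [hnd, aux_L1 d m r, aux_L2 d m r]
  refine add_le_add le_rfl (Finset.sum_le_sum fun j hj => ?_)
  have h1 : ((2*j - r : ℕ):ℝ) ≤ ((2*(j+1) - r : ℕ):ℝ) := Nat.cast_le.mpr (by omega)
  have h2 : (0:ℝ) ≤ (d.choose j : ℝ) * (m.choose (r-1-j) : ℝ) := by positivity
  rw [mul_assoc, mul_assoc]
  exact mul_le_mul_of_nonneg_right h1 h2

lemma aux_B_mono (n d r : ℕ) (hrn : r ≤ n) (hdn : d + 1 ≤ n) :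
    B n d r ≤ B n (d+1) r := by
  rw [aux_B_eq n d r (by omega), aux_B_eq n (d+1) r hdn]
  rcases Nat.eq_zero_or_pos (n.choose r) with h | h
  · simp [h]
  · have hc : (0:ℝ) < (n.choose r : ℝ) := by exact_mod_cast h
    rw [div_le_div_iff₀ hc hc]
    exact mul_le_mul_of_nonneg_right (aux_numer_mono n d r hdn) hc.le

lemma aux_B_le (n d r : ℕ) (hrn : r ≤ n) (hd : d ≤ n) : B n d r ≤ r := by
  rw [aux_B_eq n d r hd]
  have hc : (0:ℝ) < (n.choose r : ℝ) := by exact_mod_cast Nat.choose_pos hrn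
  rw [div_le_iff₀ hc]
  have hv := aux_vandermonde n d r hd
  calc ∑ i ∈ Finset.range (r+1), ((2*i - r:ℕ):ℝ) * (d.choose i:ℝ) * ((n-d).choose (r-i):ℝ)
      ≤ ∑ i ∈ Finset.range (r+1), (r:ℝ) * ((d.choose i:ℝ) * ((n-d).choose (r-i):ℝ)) := by
        refine Finset.sum_le_sum fun i hi => ?_
        simp only [Finset.mem_range] at hi
        rw [mul_assoc]
        refine mul_le_mul_of_nonneg_right ?_ (by positivity)
        exact Nat.cast_le.mpr (show 2*i - r ≤ r by omega)
    _ = (r:ℝ) * (n.choose r : ℝ) := by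
        rw [← Finset.mul_sum]
        norm_cast
        rw [hv]

lemma aux_reflect_sum (n : ℕ) (f : ℕ → ℝ) :
    ∑ r ∈ Finset.Icc 1 (n-1), f (n - r) = ∑ r ∈ Finset.Icc 1 (n-1), f r := by
  refine Finset.sum_nbij' (fun r => n - r) (fun r => n - r) ?_ ?_ ?_ ?_ ?_ <;>
    intro a ha <;> simp only [Finset.mem_Icc] at * <;> omega

lemma aux_htilde_mono {n : ℕ} (D : FlipDist n) (d : ℕ) (hdn : d + 1 ≤ n) :
    htilde D d ≤ htilde D (d+1) := by
  unfold htilde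
  refine Finset.sum_le_sum fun r hr => ?_
  simp only [Finset.mem_Icc] at hr
  have hB := aux_B_mono n d r (by omega) hdn
  exact mul_le_mul_of_nonneg_left hB (add_nonneg (D.nonneg r) (D.nonneg (n-r)))

lemma aux_htilde_le {n : ℕ} (D : FlipDist n) (d : ℕ) (hd : d ≤ n) :
    htilde D d ≤ n := by
  unfold htilde
  have step1 : ∑ r ∈ Finset.Icc 1 (n-1), (D.p r + D.p (n-r)) * B n d r
      ≤ ∑ r ∈ Finset.Icc 1 (n-1), (D.p r + D.p (n-r)) * r := by
    refine Finset.sum_le_sum fun r hr => ?_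
    simp only [Finset.mem_Icc] at hr
    exact mul_le_mul_of_nonneg_left (aux_B_le n d r (by omega) hd)
      (add_nonneg (D.nonneg r) (D.nonneg (n-r)))
  have step2 : ∑ r ∈ Finset.Icc 1 (n-1), (D.p r + D.p (n-r)) * r
      = (∑ r ∈ Finset.Icc 1 (n-1), D.p r * r)
        + ∑ r ∈ Finset.Icc 1 (n-1), D.p (n-r) * r := by
    rw [← Finset.sum_add_distrib]
    exact Finset.sum_congr rfl fun r hr => by ring
  have step3 : ∑ r ∈ Finset.Icc 1 (n-1), D.p (n-r) * r
      = ∑ r ∈ Finset.Icc 1 (n-1), D.p r * ((n:ℝ) - r) := by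
    rw [← aux_reflect_sum n (fun s => D.p s * ((n:ℝ) - s))]
    refine Finset.sum_congr rfl fun r hr => ?_
    simp only [Finset.mem_Icc] at hr
    have hcast : ((n - r : ℕ) : ℝ) = (n:ℝ) - r := by
      rw [Nat.cast_sub (by omega)]
    rw [hcast]
    ring
  have step4 : (∑ r ∈ Finset.Icc 1 (n-1), D.p r * r)
        + ∑ r ∈ Finset.Icc 1 (n-1), D.p r * ((n:ℝ) - r)
      = (n:ℝ) * ∑ r ∈ Finset.Icc 1 (n-1), D.p r := by
    rw [Finset.mul_sum, ← Finset.sum_add_distrib]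
    exact Finset.sum_congr rfl fun r hr => by ring
  have step5 : ∑ r ∈ Finset.Icc 1 (n-1), D.p r ≤ 1 := by
    rw [← D.sum_eq]
    refine Finset.sum_le_sum_of_subset_of_nonneg ?_ (fun i _ _ => D.nonneg i)
    intro r hr
    simp only [Finset.mem_Icc, Finset.mem_range] at *
    omega
  calc ∑ r ∈ Finset.Icc 1 (n-1), (D.p r + D.p (n-r)) * B n d r
      ≤ ∑ r ∈ Finset.Icc 1 (n-1), (D.p r + D.p (n-r)) * r := step1
    _ = (n:ℝ) * ∑ r ∈ Finset.Icc 1 (n-1), D.p r := by rw [step2, step3, step4]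
    _ ≤ (n:ℝ) * 1 := by
        refine mul_le_mul_of_nonneg_left step5 (by positivity)
    _ = n := mul_one _

/-- There exists `n₀` such that for all `n ≥ n₀` and every flip
distribution `D`, the function `h` is monotonically increasing on `{0,…,n}`. -/
theorem stmt17 :
    ∃ n0 : ℕ, ∀ n : ℕ, n0 ≤ n → ∀ D : FlipDist n, ∀ d : ℕ, d ≤ n - 1 →
      hfun D d ≤ hfun D (d + 1) := by
  refine ⟨8, fun n hn D d hd => ?_⟩
  unfold hfun
  split_ifs with ha hb hb
  · exact aux_htilde_mono D d (by omega)
  · exact aux_htilde_le D d (by omega)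
  · omega
  · exact le_refl _
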